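/- There exists a constant C > 0 such that for all x ≥ 0 and all ε with 0 ≤ ε ≤ 1, (1 - Φ(x√(1-ε)))/(1 - Φ(x)) ≤ exp{C(1 + x²)ε}, where Φ is the standard normal distribution function. -/

import Mathlib

open Real MeasureTheory Set Filter

/-- The standard normal cumulative distribution function. -/
noncomputable def stdGaussianCDF (x : ℝ) : ℝ :=
  (Real.sqrt (2 * Real.pi))⁻¹ * ∫ t in Set.Iic x, Real.exp (-t ^ 2 / 2)

noncomputable def phi (t : ℝ) : ℝ := Real.exp (-t ^ 2 / 2)

lemma phi_eq : phi = fun t => Real.exp (-(1/2) * t ^ 2) := by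
  funext t; unfold phi; congr 1; ring

lemma phi_pos (t : ℝ) : 0 < phi t := Real.exp_pos _

lemma integrable_phi : Integrable phi := by
  rw [phi_eq]; exact integrable_exp_neg_mul_sq (by norm_num)

lemma integral_phi : ∫ t : ℝ, phi t = Real.sqrt (2 * Real.pi) := by
  rw [phi_eq, integral_gaussian]
  congr 1; rw [eq_comm, eq_div_iff (by norm_num)]; ring

noncomputable def gg (t : ℝ) : ℝ := -phi t / (t + 1)
noncomputable def gg' (t : ℝ) : ℝ := phi t * (t ^ 2 + t + 1) / (t + 1) ^ 2

lemma hasDerivAt_gg {t : ℝ} (ht : 0 ≤ t) : HasDerivAt gg (gg' t) t := by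
  have hne : t + 1 ≠ 0 := by positivity
  have h1 : HasDerivAt (fun u : ℝ => -u ^ 2 / 2) (-t) t := by
    have := ((hasDerivAt_pow 2 t).neg).div_const 2
    refine this.congr_deriv ?_; simp; ring
  have h2 : HasDerivAt (fun u : ℝ => Real.exp (-u ^ 2 / 2)) (Real.exp (-t ^ 2 / 2) * (-t)) t :=
    h1.exp
  have h3 : HasDerivAt (fun u : ℝ => -Real.exp (-u ^ 2 / 2)) (Real.exp (-t ^ 2 / 2) * t) t := by
    refine h2.neg.congr_deriv ?_; ring
  have h4 : HasDerivAt (fun u : ℝ => u + 1) 1 t := by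
    simpa using (hasDerivAt_id t).add_const 1
  have h5 := h3.div h4 hne
  refine h5.congr_deriv ?_
  unfold gg' phi
  field_simp
  ring

lemma gg'_nonneg (t : ℝ) : 0 ≤ gg' t := by
  unfold gg' phi
  apply div_nonneg _ (sq_nonneg _)
  apply mul_nonneg (Real.exp_pos _).le
  nlinarith [sq_nonneg (t + 1/2)]

lemma gg'_le_phi {t : ℝ} (ht : 0 ≤ t) : gg' t ≤ phi t := by
  unfold gg'
  rw [div_le_iff₀ (by positivity)]
  have h : t ^ 2 + t + 1 ≤ (t + 1) ^ 2 := by nlinarith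
  have hp : 0 ≤ phi t := (Real.exp_pos _).le
  nlinarith [mul_le_mul_of_nonneg_left h hp]

lemma tendsto_gg : Tendsto gg atTop (nhds 0) := by
  have hpow : Tendsto (fun t : ℝ => t ^ 2) atTop atTop := tendsto_pow_atTop two_ne_zero
  have h1 : Tendsto (fun t : ℝ => -t ^ 2 / 2) atTop atBot :=
    (tendsto_neg_atBot_iff.mpr hpow).atBot_div_const (by norm_num)
  have hexp : Tendsto (fun t : ℝ => Real.exp (-t ^ 2 / 2)) atTop (nhds 0) :=
    Real.tendsto_exp_atBot.comp h1
  have hinv : Tendsto (fun t : ℝ => (t + 1)⁻¹) atTop (nhds (0 : ℝ)) :=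
    tendsto_inv_atTop_zero.comp (tendsto_atTop_add_const_right atTop 1 tendsto_id)
  have h2 := (hexp.mul hinv).neg
  simp only [zero_mul, neg_zero] at h2
  apply h2.congr
  intro t; unfold gg phi; rw [div_eq_mul_inv]; ring

lemma integrableOn_gg' {x : ℝ} (hx : 0 ≤ x) : IntegrableOn gg' (Set.Ioi x) := by
  apply Integrable.mono integrable_phi.integrableOn
  · apply ContinuousOn.aestronglyMeasurable _ measurableSet_Ioi
    unfold gg' phi
    apply ContinuousOn.div
    · exact (Continuous.mul (by fun_prop) (by fun_prop)).continuousOn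
    · fun_prop
    · intro t ht
      have : (0:ℝ) < t + 1 := by have := lt_of_le_of_lt hx ht; linarith
      positivity
  · filter_upwards [ae_restrict_mem measurableSet_Ioi] with t ht
    rw [Real.norm_eq_abs, Real.norm_eq_abs, abs_of_nonneg (gg'_nonneg t),
      abs_of_nonneg (phi_pos t).le]
    exact gg'_le_phi (le_trans hx (le_of_lt ht))

lemma lower {x : ℝ} (hx : 0 ≤ x) : phi x / (x + 1) ≤ ∫ t in Set.Ioi x, phi t := by
  have key : ∫ t in Set.Ioi x, gg' t = 0 - gg x :=
    MeasureTheory.integral_Ioi_of_hasDerivAt_of_tendsto'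
      (fun t ht => hasDerivAt_gg (le_trans hx ht)) (integrableOn_gg' hx) tendsto_gg
  have h2 : ∫ t in Set.Ioi x, gg' t ≤ ∫ t in Set.Ioi x, phi t :=
    setIntegral_mono_on (integrableOn_gg' hx) integrable_phi.integrableOn measurableSet_Ioi
      (fun t ht => gg'_le_phi (le_trans hx (le_of_lt ht)))
  rw [key] at h2
  unfold gg at h2
  rw [neg_div] at h2
  linarith

lemma split {y x : ℝ} (hyx : y ≤ x) :
    ∫ t in Set.Ioi y, phi t = (∫ t in Set.Ioc y x, phi t) + ∫ t in Set.Ioi x, phi t := by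
  rw [← setIntegral_union (Set.Ioc_disjoint_Ioi le_rfl) measurableSet_Ioi
    integrable_phi.integrableOn integrable_phi.integrableOn, Set.Ioc_union_Ioi_eq_Ioi hyx]

lemma seg_bound {y x : ℝ} (hy : 0 ≤ y) (hyx : y ≤ x) :
    ∫ t in Set.Ioc y x, phi t ≤ (x - y) * phi y := by
  have h1 : ∫ t in Set.Ioc y x, phi t ≤ ∫ _t in Set.Ioc y x, phi y := by
    apply setIntegral_mono_on integrable_phi.integrableOn
      (integrableOn_const measure_Ioc_lt_top.ne) measurableSet_Ioc
    intro t ht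
    unfold phi
    apply Real.exp_le_exp.2
    have h2 : y ≤ t := le_of_lt ht.1
    nlinarith
  rw [setIntegral_const, Real.volume_real_Ioc_of_le hyx, smul_eq_mul] at h1
  exact h1

lemma one_sub_cdf (x : ℝ) :
    1 - stdGaussianCDF x = (Real.sqrt (2 * Real.pi))⁻¹ * ∫ t in Set.Ioi x, phi t := by
  have hs : (0:ℝ) < Real.sqrt (2 * Real.pi) := Real.sqrt_pos.2 (by positivity)
  have hsplit := intervalIntegral.integral_Iic_add_Ioi (b := x)
    integrable_phi.integrableOn integrable_phi.integrableOn
  rw [integral_phi] at hsplit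
  unfold stdGaussianCDF
  have h : (∫ t in Set.Iic x, Real.exp (-t ^ 2 / 2)) = ∫ t in Set.Iic x, phi t := rfl
  rw [h, inv_mul_eq_div, inv_mul_eq_div, eq_div_iff hs.ne', sub_mul,
    div_mul_cancel₀ _ hs.ne']
  linarith

/-- There exists `C > 0` such that for all `x ≥ 0` and `0 ≤ ε ≤ 1`,
`(1 - Φ(x√(1-ε)))/(1 - Φ(x)) ≤ exp{C(1 + x²)ε}`. -/
theorem gaussian_tail_perturbation :
    ∃ C : ℝ, 0 < C ∧ ∀ x ε : ℝ, 0 ≤ x → 0 ≤ ε → ε ≤ 1 →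
      (1 - stdGaussianCDF (x * Real.sqrt (1 - ε))) / (1 - stdGaussianCDF x) ≤
        Real.exp (C * (1 + x ^ 2) * ε) := by
  refine ⟨2, by norm_num, fun x ε hx hε hε1 => ?_⟩
  have hs : (0:ℝ) < Real.sqrt (2 * Real.pi) := Real.sqrt_pos.2 (by positivity)
  set y := x * Real.sqrt (1 - ε) with hy
  have h1ε : (0:ℝ) ≤ 1 - ε := by linarith
  have hsq1 : Real.sqrt (1 - ε) ≤ 1 := by
    have := Real.sqrt_le_sqrt (show (1:ℝ) - ε ≤ 1 by linarith)
    simpa using this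
  have hy0 : 0 ≤ y := mul_nonneg hx (Real.sqrt_nonneg _)
  have hyx : y ≤ x := by
    calc y ≤ x * 1 := mul_le_mul_of_nonneg_left hsq1 hx
    _ = x := mul_one x
  have hy2 : y ^ 2 = x ^ 2 * (1 - ε) := by
    rw [hy, mul_pow, Real.sq_sqrt h1ε]
  have hxy : x - y ≤ x * ε := by
    have h1 : 1 - ε ≤ Real.sqrt (1 - ε) := by
      nlinarith [Real.sq_sqrt h1ε, Real.sqrt_nonneg (1 - ε)]
    nlinarith
  have hQx := lower hx
  have hQxpos : 0 < ∫ t in Set.Ioi x, phi t :=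
    lt_of_lt_of_le (div_pos (phi_pos x) (by linarith)) hQx
  set Qx := ∫ t in Set.Ioi x, phi t with hQxdef
  set Qy := ∫ t in Set.Ioi y, phi t with hQydef
  have hphiy : phi y = phi x * Real.exp (x ^ 2 * ε / 2) := by
    unfold phi
    rw [← Real.exp_add]
    congr 1
    rw [hy2]; ring
  have key : Qy ≤ Qx * Real.exp (2 * (1 + x ^ 2) * ε) := by
    have hsplit := split hyx
    have hD := seg_bound hy0 hyx
    have h1 : Qy ≤ Qx + (x * ε) * phi y := by
      have h0 : (x - y) * phi y ≤ x * ε * phi y :=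
        mul_le_mul_of_nonneg_right hxy (phi_pos y).le
      rw [hQydef, hsplit]
      linarith
    have h2 : phi x ≤ (x + 1) * Qx := by
      rw [div_le_iff₀ (by linarith : (0:ℝ) < x + 1)] at hQx
      linarith
    have h3 : Qy ≤ Qx * (1 + (x ^ 2 + x) * ε * Real.exp (x ^ 2 * ε / 2)) := by
      have hc : 0 ≤ x * ε * Real.exp (x ^ 2 * ε / 2) := by positivity
      have h5 := mul_le_mul_of_nonneg_left h2 hc
      rw [hphiy] at h1
      nlinarith
    have h4 : 1 + (x ^ 2 + x) * ε * Real.exp (x ^ 2 * ε / 2) ≤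
        Real.exp (2 * (1 + x ^ 2) * ε) := by
      have hsn : (0:ℝ) ≤ (x ^ 2 + x) * ε := by positivity
      have e1 := Real.add_one_le_exp ((x ^ 2 + x) * ε)
      have e2 : Real.exp ((x ^ 2 + x) * ε) * Real.exp (x ^ 2 * ε / 2) ≤
          Real.exp (2 * (1 + x ^ 2) * ε) := by
        rw [← Real.exp_add]
        apply Real.exp_le_exp.2
        nlinarith
      have e3 : (1:ℝ) ≤ Real.exp (x ^ 2 * ε / 2) := Real.one_le_exp (by positivity)
      nlinarith [Real.exp_pos (x ^ 2 * ε / 2)]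
    calc Qy ≤ Qx * (1 + (x ^ 2 + x) * ε * Real.exp (x ^ 2 * ε / 2)) := h3
      _ ≤ Qx * Real.exp (2 * (1 + x ^ 2) * ε) :=
        mul_le_mul_of_nonneg_left h4 hQxpos.le
  rw [one_sub_cdf, one_sub_cdf, ← hQxdef, ← hQydef,
    mul_div_mul_left _ _ (inv_ne_zero hs.ne'), div_le_iff₀ hQxpos]
  linarith
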